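/- For a ≥ 2, ∑_{i=1}^{a−1} C(a,i)/√i = 2^a·√(2/(πa))·√(2π)·(1/√2)·(1 + o(1)), i.e. ∑_{i=1}^{a−1} C(a,i)/√i ∼ 2^a·√(2/a) as a → ∞. -/

import Mathlib

open Filter Asymptotics

open Finset Real Topology
open scoped Classical

theorem mom1 (a : ℕ) : 2 * ∑ i ∈ range (a+1), i * a.choose i = a * 2 ^ a := by
  cases a with
  | zero => simp
  | succ m =>
    rw [Finset.sum_range_succ']
    have : ∀ j : ℕ, (j+1) * (m+1).choose (j+1) = (m+1) * m.choose j := by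
      intro j; rw [mul_comm (j+1), ← Nat.add_one_mul_choose_eq]
    simp only [this]
    rw [← Finset.mul_sum, Nat.sum_range_choose]; ring

theorem mom1R (a : ℕ) : 2 * ∑ i ∈ range (a+1), (i : ℝ) * (a.choose i : ℝ) = (a:ℝ) * 2 ^ a := by
  exact_mod_cast mom1 a

theorem mom2R (a : ℕ) : 4 * ∑ i ∈ range (a+1), (i : ℝ) * ((i:ℝ) - 1) * (a.choose i : ℝ)
    = (a:ℝ) * ((a:ℝ) - 1) * 2 ^ a := by
  cases a with
  | zero => simp
  | succ m =>
    rw [Finset.sum_range_succ']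
    have h : ∀ j : ℕ, ((j:ℝ)+1) * (((j:ℝ)+1) - 1) * ((m+1).choose (j+1) : ℝ)
        = ((m:ℝ)+1) * ((j:ℝ) * (m.choose j : ℝ)) := by
      intro j
      have hR : ((m:ℝ)+1) * (m.choose j : ℝ) = ((m+1).choose (j+1) : ℝ) * ((j:ℝ)+1) := by
        exact_mod_cast Nat.add_one_mul_choose_eq m j
      linear_combination (-(j:ℝ)) * hR
    push_cast
    simp only [h]
    rw [← Finset.mul_sum]
    push_cast
    have h1 := mom1R m
    linear_combination (2*((m:ℝ)+1)) * h1

theorem varR (a : ℕ) : ∑ i ∈ range (a+1), (a.choose i : ℝ) * (2*(i:ℝ) - (a:ℝ))^2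
    = (a:ℝ) * 2 ^ a := by
  have h : ∀ i ∈ range (a+1), (a.choose i : ℝ) * (2*(i:ℝ) - (a:ℝ))^2
      = 4 * ((i:ℝ) * ((i:ℝ)-1) * (a.choose i : ℝ))
        + ((4:ℝ) - 4*(a:ℝ)) * ((i:ℝ) * (a.choose i : ℝ))
        + (a:ℝ)^2 * (a.choose i : ℝ) := by
    intro i _; ring
  rw [Finset.sum_congr rfl h]
  rw [Finset.sum_add_distrib, Finset.sum_add_distrib, ← Finset.mul_sum, ← Finset.mul_sum,
    ← Finset.mul_sum]
  have h1 := mom1R a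
  have h2 := mom2R a
  have h3 : ∑ i ∈ range (a+1), (a.choose i : ℝ) = 2 ^ a := by
    exact_mod_cast Nat.sum_range_choose a
  linear_combination h2 + (2 - 2*(a:ℝ)) * h1 + (a:ℝ)^2 * h3

theorem cheb (a : ℕ) (t : ℝ) (ht : 0 < t) (S : Finset ℕ) (hS : S ⊆ range (a+1))
    (h : ∀ i ∈ S, t < |2*(i:ℝ) - (a:ℝ)|) :
    ∑ i ∈ S, (a.choose i : ℝ) ≤ (a:ℝ) * 2 ^ a / t^2 := by
  rw [le_div_iff₀ (by positivity)]
  calc (∑ i ∈ S, (a.choose i : ℝ)) * t^2 = ∑ i ∈ S, (a.choose i : ℝ) * t^2 := Finset.sum_mul ..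
    _ ≤ ∑ i ∈ S, (a.choose i : ℝ) * (2*(i:ℝ) - (a:ℝ))^2 := by
        apply Finset.sum_le_sum
        intro i hi
        have h1 := h i hi
        have : t^2 ≤ (2*(i:ℝ) - (a:ℝ))^2 := by
          rw [← sq_abs (2*(i:ℝ) - (a:ℝ))]
          exact pow_le_pow_left₀ ht.le h1.le 2
        exact mul_le_mul_of_nonneg_left this (by positivity)
    _ ≤ ∑ i ∈ range (a+1), (a.choose i : ℝ) * (2*(i:ℝ) - (a:ℝ))^2 := by
        apply Finset.sum_le_sum_of_subset_of_nonneg hS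
        intro i _ _; positivity
    _ = (a:ℝ) * 2 ^ a := varR a

theorem main_bounds : ∀ᶠ a : ℕ in atTop,
    Real.sqrt (2/((a:ℝ) + (a:ℝ)^((4:ℝ)/5))) * (2^a - (a:ℝ)*2^a/((a:ℝ)^((4:ℝ)/5))^2)
      ≤ (∑ i ∈ Finset.Icc 1 (a - 1), (a.choose i : ℝ) / Real.sqrt i) ∧
    (∑ i ∈ Finset.Icc 1 (a - 1), (a.choose i : ℝ) / Real.sqrt i)
      ≤ Real.sqrt (2/((a:ℝ) - (a:ℝ)^((4:ℝ)/5))) * 2^a + (a:ℝ)*2^a/((a:ℝ)^((4:ℝ)/5))^2 := by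
  filter_upwards [eventually_ge_atTop 2] with a ha
  set A : ℝ := (a:ℝ) with hA
  set t : ℝ := A ^ ((4:ℝ)/5) with htdef
  have hA2 : (2:ℝ) ≤ A := by rw [hA]; exact_mod_cast ha
  have hA0 : (0:ℝ) < A := by linarith
  have hA1 : (1:ℝ) < A := by linarith
  have ht0 : 0 < t := Real.rpow_pos_of_pos hA0 _
  have hta : t < A := by
    calc t < A ^ (1:ℝ) := Real.rpow_lt_rpow_of_exponent_lt hA1 (by norm_num)
    _ = A := Real.rpow_one A
  set M : Finset ℕ := (range (a+1)).filter (fun i => |2*(i:ℝ) - A| ≤ t) with hM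
  have hMIcc : M ⊆ Finset.Icc 1 (a-1) := by
    intro i hi
    rw [hM, Finset.mem_filter, Finset.mem_range] at hi
    obtain ⟨hir, habs⟩ := hi
    rw [abs_le] at habs
    have h1 : A - t ≤ 2*(i:ℝ) := by linarith [habs.1]
    have h2 : 2*(i:ℝ) ≤ A + t := by linarith [habs.2]
    have hi1 : 1 ≤ i := by
      by_contra hc
      push_neg at hc
      interval_cases i
      · simp at h1; linarith
    have hi2 : i ≤ a - 1 := by
      have : 2*(i:ℝ) < 2*A := by linarith
      have : (i:ℝ) < A := by linarith
      have : i < a := by rw [hA] at this; exact_mod_cast this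
      omega
    exact Finset.mem_Icc.2 ⟨hi1, hi2⟩
  -- per-element bounds on M
  have hmemM : ∀ i ∈ M, A - t ≤ 2*(i:ℝ) ∧ 2*(i:ℝ) ≤ A + t ∧ 1 ≤ i := by
    intro i hi
    have hIcc := hMIcc hi
    rw [hM, Finset.mem_filter] at hi
    have habs := abs_le.1 hi.2
    exact ⟨by linarith [habs.1], by linarith [habs.2], (Finset.mem_Icc.1 hIcc).1⟩
  have hlowterm : ∀ i ∈ M, (a.choose i : ℝ) * Real.sqrt (2/(A+t))
      ≤ (a.choose i : ℝ) / Real.sqrt i := by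
    intro i hi
    obtain ⟨h1, h2, h3⟩ := hmemM i hi
    have hi0 : (0:ℝ) < i := by exact_mod_cast h3
    have hs : Real.sqrt (2/(A+t)) ≤ 1 / Real.sqrt i := by
      have e1 : (2/(A+t)) = ((A+t)/2)⁻¹ := by
        rw [inv_div]
      rw [e1, Real.sqrt_inv, inv_eq_one_div]
      apply one_div_le_one_div_of_le (Real.sqrt_pos.2 hi0)
      exact Real.sqrt_le_sqrt (by linarith)
    calc (a.choose i : ℝ) * Real.sqrt (2/(A+t)) ≤ (a.choose i : ℝ) * (1 / Real.sqrt i) :=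
          mul_le_mul_of_nonneg_left hs (by positivity)
      _ = (a.choose i : ℝ) / Real.sqrt i := by ring
  have hhighterm : ∀ i ∈ M, (a.choose i : ℝ) / Real.sqrt i
      ≤ (a.choose i : ℝ) * Real.sqrt (2/(A-t)) := by
    intro i hi
    obtain ⟨h1, h2, h3⟩ := hmemM i hi
    have hAt : (0:ℝ) < A - t := by linarith
    have hs : 1 / Real.sqrt i ≤ Real.sqrt (2/(A-t)) := by
      have e1 : (2/(A-t)) = ((A-t)/2)⁻¹ := by rw [inv_div]
      rw [e1, Real.sqrt_inv, inv_eq_one_div]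
      apply one_div_le_one_div_of_le (Real.sqrt_pos.2 (by linarith))
      exact Real.sqrt_le_sqrt (by linarith)
    calc (a.choose i : ℝ) / Real.sqrt i = (a.choose i : ℝ) * (1 / Real.sqrt i) := by ring
      _ ≤ (a.choose i : ℝ) * Real.sqrt (2/(A-t)) :=
          mul_le_mul_of_nonneg_left hs (by positivity)
  -- Chebyshev bounds
  have hcomp : ∀ i ∈ range (a+1) \ M, t < |2*(i:ℝ) - A| := by
    intro i hi
    rw [Finset.mem_sdiff] at hi
    by_contra hc
    push_neg at hc
    exact hi.2 (by rw [hM, Finset.mem_filter]; exact ⟨hi.1, hc⟩)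
  have hchebcomp : ∑ i ∈ range (a+1) \ M, (a.choose i : ℝ) ≤ A * 2^a / t^2 :=
    cheb a t ht0 _ (Finset.sdiff_subset) hcomp
  have hsum2 : ∑ i ∈ range (a+1), (a.choose i : ℝ) = 2^a := by
    exact_mod_cast Nat.sum_range_choose a
  have hMsub : M ⊆ range (a+1) := Finset.filter_subset _ _
  have hsplitM : ∑ i ∈ range (a+1) \ M, (a.choose i : ℝ) + ∑ i ∈ M, (a.choose i : ℝ) = 2^a := by
    rw [Finset.sum_sdiff hMsub, hsum2]
  have hB_lb : 2^a - A * 2^a / t^2 ≤ ∑ i ∈ M, (a.choose i : ℝ) := by linarith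
  have hB_ub : ∑ i ∈ M, (a.choose i : ℝ) ≤ 2^a := by
    have : 0 ≤ ∑ i ∈ range (a+1) \ M, (a.choose i : ℝ) :=
      Finset.sum_nonneg (fun i _ => by positivity)
    linarith
  -- tail of f
  have hIccsub : Finset.Icc 1 (a-1) ⊆ range (a+1) := by
    intro i hi
    rw [Finset.mem_Icc] at hi
    rw [Finset.mem_range]
    omega
  have htail : ∑ i ∈ Finset.Icc 1 (a-1) \ M, (a.choose i : ℝ) / Real.sqrt i
      ≤ A * 2^a / t^2 := by
    calc ∑ i ∈ Finset.Icc 1 (a-1) \ M, (a.choose i : ℝ) / Real.sqrt i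
        ≤ ∑ i ∈ Finset.Icc 1 (a-1) \ M, (a.choose i : ℝ) := by
          apply Finset.sum_le_sum
          intro i hi
          have h1 : 1 ≤ i := (Finset.mem_Icc.1 (Finset.mem_sdiff.1 hi).1).1
          have h1R : (1:ℝ) ≤ Real.sqrt i := by
            rw [show (1:ℝ) = Real.sqrt 1 by simp]
            exact Real.sqrt_le_sqrt (by exact_mod_cast h1)
          calc (a.choose i : ℝ) / Real.sqrt i ≤ (a.choose i : ℝ) / 1 :=
                div_le_div_of_nonneg_left (by positivity) (by linarith) h1R
            _ = (a.choose i : ℝ) := by ring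
      _ ≤ A * 2^a / t^2 := by
          apply cheb a t ht0 _ (fun i hi => hIccsub (Finset.mem_sdiff.1 hi).1)
          intro i hi
          have h2 := (Finset.mem_sdiff.1 hi).2
          by_contra hc
          push_neg at hc
          exact h2 (by rw [hM, Finset.mem_filter]
                       exact ⟨hIccsub (Finset.mem_sdiff.1 hi).1, hc⟩)
  -- split f
  have hsplitf : ∑ i ∈ Finset.Icc 1 (a-1) \ M, (a.choose i : ℝ) / Real.sqrt i
      + ∑ i ∈ M, (a.choose i : ℝ) / Real.sqrt i
      = ∑ i ∈ Finset.Icc 1 (a-1), (a.choose i : ℝ) / Real.sqrt i :=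
    Finset.sum_sdiff hMIcc
  constructor
  · -- lower bound
    have h1 : Real.sqrt (2/(A+t)) * (2^a - A*2^a/t^2)
        ≤ Real.sqrt (2/(A+t)) * ∑ i ∈ M, (a.choose i : ℝ) :=
      mul_le_mul_of_nonneg_left hB_lb (Real.sqrt_nonneg _)
    have h2 : Real.sqrt (2/(A+t)) * ∑ i ∈ M, (a.choose i : ℝ)
        ≤ ∑ i ∈ M, (a.choose i : ℝ) / Real.sqrt i := by
      rw [Finset.mul_sum]
      apply Finset.sum_le_sum
      intro i hi
      rw [mul_comm]
      exact hlowterm i hi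
    have h3 : 0 ≤ ∑ i ∈ Finset.Icc 1 (a-1) \ M, (a.choose i : ℝ) / Real.sqrt i :=
      Finset.sum_nonneg (fun i _ => by positivity)
    linarith
  · -- upper bound
    have h2 : ∑ i ∈ M, (a.choose i : ℝ) / Real.sqrt i
        ≤ Real.sqrt (2/(A-t)) * 2^a := by
      calc ∑ i ∈ M, (a.choose i : ℝ) / Real.sqrt i
          ≤ ∑ i ∈ M, (a.choose i : ℝ) * Real.sqrt (2/(A-t)) := Finset.sum_le_sum hhighterm
        _ = Real.sqrt (2/(A-t)) * ∑ i ∈ M, (a.choose i : ℝ) := by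
            rw [Finset.mul_sum]; exact Finset.sum_congr rfl (fun i _ => by ring)
        _ ≤ Real.sqrt (2/(A-t)) * 2^a :=
            mul_le_mul_of_nonneg_left hB_ub (Real.sqrt_nonneg _)
    linarith

theorem E1 (a : ℕ) (ha : 2 ≤ a) :
    (Real.sqrt (1/(1+(a:ℝ)^(-(1/5):ℝ))) * (1 - (a:ℝ)^(-(3/5):ℝ))) * (2^a * Real.sqrt (2/(a:ℝ)))
      = Real.sqrt (2/((a:ℝ) + (a:ℝ)^((4:ℝ)/5)))
        * (2^a - (a:ℝ)*2^a/((a:ℝ)^((4:ℝ)/5))^2) := by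
  have hA0 : (0:ℝ) < (a:ℝ) := by
    have : (0:ℕ) < a := by omega
    exact_mod_cast this
  set A : ℝ := (a:ℝ) with hA
  set u : ℝ := A ^ (-(1/5):ℝ) with hu
  set v : ℝ := A ^ (-(3/5):ℝ) with hv
  set t : ℝ := A ^ ((4:ℝ)/5) with ht
  have hu0 : 0 < u := Real.rpow_pos_of_pos hA0 _
  have ht0 : 0 < t := Real.rpow_pos_of_pos hA0 _
  have hAu : A * u = t := by
    rw [hu, ht]
    nth_rewrite 1 [← Real.rpow_one A]
    rw [← Real.rpow_add hA0]
    norm_num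
  have key1 : Real.sqrt (1/(1+u)) * Real.sqrt (2/A) = Real.sqrt (2/(A+t)) := by
    rw [← Real.sqrt_mul (by positivity)]
    congr 1
    rw [div_mul_div_comm, one_mul]
    rw [show (1+u)*A = A + t by rw [add_mul, one_mul, mul_comm u A, hAu]]
  have key2 : A / t^2 = v := by
    have h2 : v * t^2 = A := by
      rw [sq, ht, hv, ← Real.rpow_add hA0, ← Real.rpow_add hA0]
      norm_num
    rw [eq_comm, eq_div_iff (by positivity)]
    exact h2
  linear_combination ((1 - v) * (2:ℝ)^a) * key1 + (Real.sqrt (2/(A+t)) * (2:ℝ)^a) * key2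

theorem E2 (a : ℕ) (ha : 2 ≤ a) :
    (Real.sqrt (1/(1-(a:ℝ)^(-(1/5):ℝ))) + (a:ℝ)^(-(1/10):ℝ)/Real.sqrt 2)
        * (2^a * Real.sqrt (2/(a:ℝ)))
      = Real.sqrt (2/((a:ℝ) - (a:ℝ)^((4:ℝ)/5))) * 2^a
        + (a:ℝ)*2^a/((a:ℝ)^((4:ℝ)/5))^2 := by
  have hA0 : (0:ℝ) < (a:ℝ) := by
    have : (0:ℕ) < a := by omega
    exact_mod_cast this
  have hA1 : (1:ℝ) < (a:ℝ) := by
    have : (1:ℕ) < a := by omega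
    exact_mod_cast this
  set A : ℝ := (a:ℝ) with hA
  set u : ℝ := A ^ (-(1/5):ℝ) with hu
  set w : ℝ := A ^ (-(1/10):ℝ) with hw
  set t : ℝ := A ^ ((4:ℝ)/5) with ht
  have hu0 : 0 < u := Real.rpow_pos_of_pos hA0 _
  have ht0 : 0 < t := Real.rpow_pos_of_pos hA0 _
  have hu1 : u < 1 := by
    rw [hu, show (1:ℝ) = A ^ (0:ℝ) by rw [Real.rpow_zero]]
    exact Real.rpow_lt_rpow_of_exponent_lt hA1 (by norm_num)
  have hAu : A * u = t := by
    rw [hu, ht]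
    nth_rewrite 1 [← Real.rpow_one A]
    rw [← Real.rpow_add hA0]
    norm_num
  have key1 : Real.sqrt (1/(1-u)) * Real.sqrt (2/A) = Real.sqrt (2/(A-t)) := by
    have h1u : (0:ℝ) < 1 - u := by linarith
    rw [← Real.sqrt_mul (by positivity)]
    congr 1
    rw [div_mul_div_comm, one_mul]
    rw [show (1-u)*A = A - t by rw [sub_mul, one_mul, mul_comm u A, hAu]]
  have key3 : (w/Real.sqrt 2) * Real.sqrt (2/A) = A / t^2 := by
    have h2 : A / t^2 = A ^ (-(3/5):ℝ) := by
      rw [eq_comm, eq_div_iff (by positivity), sq, ht, ← Real.rpow_add hA0,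
        ← Real.rpow_add hA0]
      norm_num
    have h2ne : Real.sqrt 2 ≠ 0 := by positivity
    rw [h2, Real.sqrt_div (by norm_num : (0:ℝ) ≤ 2) A, div_mul_div_comm,
      mul_comm w (Real.sqrt 2), mul_div_mul_left _ _ h2ne, Real.sqrt_eq_rpow,
      hw, div_eq_mul_inv, ← Real.rpow_neg hA0.le, ← Real.rpow_add hA0]
    norm_num
  linear_combination (2:ℝ)^a * key1 + (2:ℝ)^a * key3

theorem stmt_15 :
    (fun a : ℕ => ∑ i ∈ Finset.Icc 1 (a - 1), (a.choose i : ℝ) / Real.sqrt i)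
      ~[atTop] fun a : ℕ => (2 : ℝ) ^ a * Real.sqrt (2 / a) := by
  have hgpos : ∀ a : ℕ, 2 ≤ a → (0:ℝ) < 2^a * Real.sqrt (2 / a) := by
    intro a ha
    have hA0 : (0:ℝ) < (a:ℝ) := by
      have : (0:ℕ) < a := by omega
      exact_mod_cast this
    have : (0:ℝ) < 2 / (a:ℝ) := by positivity
    positivity
  apply isEquivalent_of_tendsto_one
  · -- limits
    have hlim : ∀ c : ℝ, 0 < c → Tendsto (fun a : ℕ => (a:ℝ)^(-c)) atTop (𝓝 0) :=
      fun c hc => (tendsto_rpow_neg_atTop hc).comp tendsto_natCast_atTop_atTop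
    have h15 : Tendsto (fun a : ℕ => (a:ℝ)^(-(1/5):ℝ)) atTop (𝓝 0) := hlim (1/5) (by norm_num)
    have h35 : Tendsto (fun a : ℕ => (a:ℝ)^(-(3/5):ℝ)) atTop (𝓝 0) := hlim (3/5) (by norm_num)
    have h110 : Tendsto (fun a : ℕ => (a:ℝ)^(-(1/10):ℝ)) atTop (𝓝 0) := hlim (1/10) (by norm_num)
    have hlo : Tendsto (fun a : ℕ =>
        Real.sqrt (1/(1+(a:ℝ)^(-(1/5):ℝ))) * (1 - (a:ℝ)^(-(3/5):ℝ))) atTop (𝓝 1) := by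
      have t2 : Tendsto (fun a : ℕ => 1/(1+(a:ℝ)^(-(1/5):ℝ))) atTop (𝓝 (1/(1+0))) :=
        tendsto_const_nhds.div (tendsto_const_nhds.add h15) (by norm_num)
      have t3 := t2.sqrt
      have t4 : Tendsto (fun a : ℕ => 1 - (a:ℝ)^(-(3/5):ℝ)) atTop (𝓝 (1-0)) :=
        tendsto_const_nhds.sub h35
      have := t3.mul t4
      norm_num at this
      exact this.congr fun a => by rw [← Real.sqrt_inv, ← one_div]
    have hhi : Tendsto (fun a : ℕ =>
        Real.sqrt (1/(1-(a:ℝ)^(-(1/5):ℝ))) + (a:ℝ)^(-(1/10):ℝ)/Real.sqrt 2) atTop (𝓝 1) := by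
      have t2 : Tendsto (fun a : ℕ => 1/(1-(a:ℝ)^(-(1/5):ℝ))) atTop (𝓝 (1/(1-0))) :=
        tendsto_const_nhds.div (tendsto_const_nhds.sub h15) (by norm_num)
      have t3 := t2.sqrt
      have t4 : Tendsto (fun a : ℕ => (a:ℝ)^(-(1/10):ℝ)/Real.sqrt 2) atTop (𝓝 (0/Real.sqrt 2)) :=
        h110.div_const _
      have := t3.add t4
      norm_num at this
      exact this.congr fun a => by rw [← Real.sqrt_inv, ← one_div]
    apply tendsto_of_tendsto_of_tendsto_of_le_of_le' hlo hhi
    · filter_upwards [main_bounds, eventually_ge_atTop 2] with a hmb ha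
      rw [Pi.div_apply, le_div_iff₀ (hgpos a ha), E1 a ha]
      exact hmb.1
    · filter_upwards [main_bounds, eventually_ge_atTop 2] with a hmb ha
      rw [Pi.div_apply, div_le_iff₀ (hgpos a ha), E2 a ha]
      exact hmb.2
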